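/- Let n = mk + r with 0 ≤ r ≤ k-1, let V be an n-dimensional vector space over F_q, and let U be a (k+r)-dimensional subspace of V. Then there exists a family S of k-dimensional subspaces of V, each having trivial intersection with U, such that every 1-dimensional subspace of V not contained in U lies in exactly one member of S; moreover |S| = q^(k+r)·[n-k-r]/[k], where [m] = (q^m-1)/(q-1). -/

import Mathlib

open Polynomial

theorem exists_finite_ext (K : Type*) [Field K] [Fintype K] (d : ℕ) (hd : d ≠ 0) :
    ∃ (L : Type) (_ : Field L) (_ : Algebra K L),
      Module.finrank K L = d ∧ Finite L := by
  set p := ringChar K with hpdef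
  haveI : CharP K p := ringChar.charP K
  have hp : p.Prime := CharP.char_is_prime K p
  haveI : Fact p.Prime := ⟨hp⟩
  obtain ⟨e, -, hcard⟩ := FiniteField.card K p
  letI : Algebra (ZMod p) K := ZMod.algebra K p
  have hed : (e : ℕ) * d ≠ 0 := by positivity
  let gal := GaloisField p (e * d)
  have hp1 : 1 < p := hp.one_lt
  have hne : (X ^ p ^ ((e : ℕ) * d) - X : (ZMod p)[X]) ≠ 0 :=
    FiniteField.X_pow_card_pow_sub_X_ne_zero _ hed hp1
  have hdvd : (X ^ p ^ (e : ℕ) - X : (ZMod p)[X]) ∣ (X ^ p ^ ((e : ℕ) * d) - X) := by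
    have h1 : (p : ℕ) ^ (e : ℕ) - 1 ∣ p ^ ((e : ℕ) * d) - 1 := by
      have := Nat.sub_dvd_pow_sub_pow (p ^ (e : ℕ)) 1 d
      rwa [one_pow, ← pow_mul] at this
    have key : ∀ a b : ℕ, a ∣ b → (X ^ a - 1 : (ZMod p)[X]) ∣ (X ^ b - 1) := by
      rintro a b ⟨c, rfl⟩
      have := sub_dvd_pow_sub_pow (X ^ a : (ZMod p)[X]) 1 c
      rwa [one_pow, ← pow_mul] at this
    have h2 := key _ _ h1
    have hx : ∀ s : ℕ, 1 ≤ s → (X ^ s - X : (ZMod p)[X]) = X * (X ^ (s - 1) - 1) := by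
      intro s hs
      rw [mul_sub, mul_one, ← pow_succ']
      have hss : s - 1 + 1 = s := by omega
      rw [hss]
    rw [hx _ (Nat.one_le_iff_ne_zero.mpr (pow_ne_zero _ hp.pos.ne')),
        hx _ (Nat.one_le_iff_ne_zero.mpr (pow_ne_zero _ hp.pos.ne'))]
    exact mul_dvd_mul_left _ h2
  haveI : IsSplittingField (ZMod p) K (X ^ p ^ (e : ℕ) - X) :=
    FiniteField.isSplittingField_of_card_eq _ _ hcard
  have hsp : Splits ((X ^ p ^ (e : ℕ) - X : (ZMod p)[X]).map (algebraMap (ZMod p) gal)) :=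
    (Polynomial.SplittingField.splits _).of_dvd (Polynomial.map_ne_zero hne) (Polynomial.map_dvd _ hdvd)
  let φ : K →ₐ[ZMod p] gal := IsSplittingField.lift K (X ^ p ^ (e : ℕ) - X) hsp
  letI : Algebra K gal := φ.toRingHom.toAlgebra
  haveI : Finite gal := inferInstance
  haveI : Fintype gal := Fintype.ofFinite _
  haveI : Module.Finite K gal := Module.Finite.of_finite
  have hcardgal : Fintype.card gal = Fintype.card K ^ d := by
    have h := GaloisField.card p ((e : ℕ) * d) hed
    rw [Nat.card_eq_fintype_card] at h
    rw [h, hcard, ← pow_mul]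
  have hfr : Module.finrank K gal = d := by
    have h2 : Fintype.card gal = Fintype.card K ^ Module.finrank K gal :=
      Module.card_eq_pow_finrank
    rw [hcardgal] at h2
    have hq2 : 2 ≤ Fintype.card K := Fintype.one_lt_card
    exact (Nat.pow_right_injective hq2 h2).symm
  exact ⟨gal, inferInstance, inferInstance, hfr, inferInstance⟩

open Module


theorem model_spread (K : Type*) [Field K] [Fintype K]
    (L E : Type*) [Field L] [Field E] [Algebra K L] [Algebra K E]
    [Finite L] [Finite E]
    (k r t : ℕ) (hk1 : 1 ≤ k)
    (hkL : Module.finrank K L = k) (hkE : Module.finrank K E = k + r) :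
    ∃ S : Finset (Submodule K (E × (Fin t → L))),
      (∀ W ∈ S, Module.finrank K W = k ∧ W ⊓ Submodule.fst K E (Fin t → L) = ⊥) ∧
      (∀ v : Submodule K (E × (Fin t → L)), Module.finrank K v = 1 →
        ¬ v ≤ Submodule.fst K E (Fin t → L) → ∃! W, W ∈ S ∧ v ≤ W) ∧
      S.card * (Fintype.card K ^ k - 1)
        = Fintype.card K ^ (k + r) * (Fintype.card K ^ (t * k) - 1) := by
  classical
  set P := (Fin t → L) with hPdef
  set M := E × P with hMdef
  haveI : Fintype L := Fintype.ofFinite _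
  haveI : Fintype E := Fintype.ofFinite _
  haveI : Module.Finite K L := Module.Finite.of_finite
  haveI : Module.Finite K E := Module.Finite.of_finite
  -- an injective K-linear map ι : L →ₗ[K] E
  obtain ⟨ι, hι⟩ : ∃ ι : L →ₗ[K] E, Function.Injective ι := by
    let b1 := Module.finBasisOfFinrankEq K L hkL
    let b2 := Module.finBasisOfFinrankEq K E hkE
    let f : Fin (k + r) → Fin k := fun j => ⟨min j.1 (k - 1), by omega⟩
    have hf : Function.Surjective f := by
      intro i
      refine ⟨⟨i.1, by omega⟩, ?_⟩
      have : min i.1 (k - 1) = i.1 := by omega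
      simp [f, this]
    refine ⟨(b2.equivFun.symm.toLinearMap.comp
      (LinearMap.funLeft K K f)).comp b1.equivFun.toLinearMap, ?_⟩
    exact b2.equivFun.symm.injective.comp
      ((LinearMap.funLeft_injective_of_surjective K K f hf).comp b1.equivFun.injective)
  have hιne : ∀ c : L, c ≠ 0 → ι c ≠ 0 := by
    intro c hc h
    exact hc (hι (h.trans (map_zero ι).symm))
  -- helper for L-smul on P
  have hsmul : ∀ (c : L) (x : P), c • x = 0 → c ≠ 0 → x = 0 := by
    intro c x h hc
    have : x = c⁻¹ • (c • x) := by rw [smul_smul, inv_mul_cancel₀ hc, one_smul]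
    rw [this, h, smul_zero]
  haveI : Finite (Projectivization L P) := Quotient.finite _
  haveI : Fintype (Projectivization L P) := Fintype.ofFinite _
  -- the spread members
  let lm : Projectivization L P × E → (L →ₗ[K] M) := fun pa =>
    (pa.2 • ι).prod ((LinearMap.toSpanSingleton L P pa.1.rep).restrictScalars K)
  have hlm : ∀ pa lam, lm pa lam = (pa.2 • ι lam, lam • pa.1.rep) := fun pa lam => rfl
  have hlminj : ∀ pa, Function.Injective (lm pa) := by
    intro pa
    rw [← LinearMap.ker_eq_bot, LinearMap.ker_eq_bot']
    intro lam h
    rw [hlm, Prod.mk_eq_zero] at h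
    by_contra hlam
    exact pa.1.rep_nonzero (hsmul _ _ h.2 hlam)
  let Wm : Projectivization L P × E → Submodule K M := fun pa => LinearMap.range (lm pa)
  have hWmem : ∀ pa (z : M), z ∈ Wm pa ↔ ∃ lam : L, (pa.2 • ι lam, lam • pa.1.rep) = z := by
    intro pa z
    constructor
    · rintro ⟨lam, rfl⟩; exact ⟨lam, (hlm pa lam).symm⟩
    · rintro ⟨lam, rfl⟩; exact ⟨lam, hlm pa lam⟩
  have hmemfst : ∀ z : M, z ∈ Submodule.fst K E P ↔ z.2 = 0 := by
    intro z
    simp only [Submodule.fst, Submodule.mem_comap, Submodule.mem_bot, LinearMap.snd_apply]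
    exact Iff.rfl
  -- rank and intersection
  have hrank : ∀ pa, Module.finrank K (Wm pa) = k := by
    intro pa
    show Module.finrank K (LinearMap.range (lm pa)) = k
    rw [LinearMap.finrank_range_of_inj (hlminj pa), hkL]
  have hint : ∀ pa, Wm pa ⊓ Submodule.fst K E P = ⊥ := by
    intro pa
    rw [eq_bot_iff]
    intro z hz
    rw [Submodule.mem_inf] at hz
    obtain ⟨hz1, hz2⟩ := hz
    obtain ⟨lam, rfl⟩ := (hWmem pa z).mp hz1
    rw [hmemfst] at hz2
    have hlam : lam = 0 := by
      by_contra hlam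
      exact pa.1.rep_nonzero (hsmul _ _ hz2 hlam)
    subst hlam
    simp [Submodule.mem_bot, Prod.ext_iff]; rfl
  -- identification of the projective point
  have hmk : ∀ (z2 : P) (hz : z2 ≠ 0) (p : Projectivization L P) (lam : L),
      lam • p.rep = z2 → p = Projectivization.mk L z2 hz := by
    intro z2 hz p lam h
    have hlam0 : lam ≠ 0 := by
      rintro rfl; rw [zero_smul] at h; exact hz h.symm
    rw [← Projectivization.mk_rep p, Projectivization.mk_eq_mk_iff]
    refine ⟨(Units.mk0 lam hlam0)⁻¹, ?_⟩
    rw [Units.smul_def, ← h, smul_smul]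
    rw [Units.val_inv_eq_inv_val, Units.val_mk0, inv_mul_cancel₀ hlam0, one_smul]
  have hlamcancel : ∀ (x : P), x ≠ 0 → ∀ lam lam' : L, lam • x = lam' • x → lam = lam' := by
    intro x hx lam lam' h
    by_contra hne
    exact hx (hsmul _ _ (by rw [sub_smul, h, sub_self]) (sub_ne_zero_of_ne hne))
  -- uniqueness of the member through a point with nonzero second component
  have huniq : ∀ (z : M), z.2 ≠ 0 → ∀ pa pa', z ∈ Wm pa → z ∈ Wm pa' → pa = pa' := by
    rintro z hz ⟨p, α⟩ ⟨p', α'⟩ h h'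
    obtain ⟨lam, hl⟩ := (hWmem _ z).mp h
    obtain ⟨lam', hl'⟩ := (hWmem _ z).mp h'
    have h1 : α • ι lam = z.1 := congrArg Prod.fst hl
    have h2 : lam • p.rep = z.2 := congrArg Prod.snd hl
    have h1' : α' • ι lam' = z.1 := congrArg Prod.fst hl'
    have h2' : lam' • p'.rep = z.2 := congrArg Prod.snd hl'
    have hp : p = Projectivization.mk L z.2 hz := hmk z.2 hz p lam h2
    have hp' : p' = Projectivization.mk L z.2 hz := hmk z.2 hz p' lam' h2'
    have hpp : p = p' := hp.trans hp'.symm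
    have hlam : lam = lam' := by
      apply hlamcancel p.rep p.rep_nonzero
      rw [h2, hpp, h2']
    have hlam0 : lam ≠ 0 := by
      rintro rfl; rw [zero_smul] at h2; exact hz h2.symm
    have hα : α = α' := by
      have := h1.trans h1'.symm
      rw [← hlam] at this
      rw [smul_eq_mul, smul_eq_mul] at this
      exact mul_right_cancel₀ (hιne lam hlam0) this
    rw [Prod.mk.injEq]
    exact ⟨hpp, hα⟩
  -- existence of a member through a point with nonzero second component
  have hexists : ∀ (z : M), z.2 ≠ 0 → ∃ pa, z ∈ Wm pa := by
    intro z hz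
    obtain ⟨μ, hμ⟩ := Projectivization.exists_smul_eq_mk_rep L z.2 hz
    set p := Projectivization.mk L z.2 hz with hpdef
    set lam0 : L := ((μ⁻¹ : Lˣ) : L) with hlam0def
    have hlam00 : lam0 ≠ 0 := Units.ne_zero _
    have hrep : lam0 • p.rep = z.2 := by
      rw [← hμ, Units.smul_def, smul_smul, hlam0def,
        Units.val_inv_eq_inv_val, inv_mul_cancel₀ (Units.ne_zero μ), one_smul]
    have hι0 : ι lam0 ≠ 0 := hιne lam0 hlam00
    refine ⟨(p, z.1 * (ι lam0)⁻¹), (hWmem _ z).mpr ⟨lam0, ?_⟩⟩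
    have hfst : (z.1 * (ι lam0)⁻¹) • ι lam0 = z.1 := by
      rw [smul_eq_mul, mul_assoc, inv_mul_cancel₀ hι0, mul_one]
    rw [hfst, hrep]
  have hWminj : Function.Injective Wm := by
    intro pa pa' h
    have hw : lm pa 1 ∈ Wm pa := ⟨1, rfl⟩
    have hw' : lm pa 1 ∈ Wm pa' := h ▸ hw
    have hz2 : (lm pa 1).2 ≠ 0 := by
      rw [hlm, one_smul]
      exact pa.1.rep_nonzero
    exact huniq _ hz2 pa pa' hw hw'
  -- the finset
  let S : Finset (Submodule K M) := Finset.image Wm Finset.univ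
  haveI : FiniteDimensional K M := by
    infer_instance
  refine ⟨S, ?_, ?_, ?_⟩
  · intro W hW
    obtain ⟨pa, -, rfl⟩ := Finset.mem_image.mp hW
    exact ⟨hrank pa, hint pa⟩
  · intro v hv1 hvU
    obtain ⟨z, hzv, hzU⟩ := SetLike.not_le_iff_exists.mp hvU
    have hz2 : z.2 ≠ 0 := fun h => hzU ((hmemfst z).mpr h)
    have hz0 : z ≠ 0 := by
      rintro rfl; exact hz2 rfl
    have hvspan : v = Submodule.span K {z} := by
      refine (Submodule.eq_of_le_of_finrank_le
        (Submodule.span_le.mpr (Set.singleton_subset_iff.mpr hzv)) ?_).symm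
      rw [hv1, finrank_span_singleton hz0]
    obtain ⟨pa, hpa⟩ := hexists z hz2
    refine ⟨Wm pa, ⟨Finset.mem_image_of_mem _ (Finset.mem_univ pa), ?_⟩, ?_⟩
    · rw [hvspan]
      exact Submodule.span_le.mpr (Set.singleton_subset_iff.mpr hpa)
    · rintro W ⟨hWS, hvW⟩
      obtain ⟨pa', -, rfl⟩ := Finset.mem_image.mp hWS
      exact congrArg Wm (huniq z hz2 pa' pa (hvW hzv) hpa)
  · -- cardinality
    have hcard : S.card = Fintype.card (Projectivization L P) * Fintype.card E := by
      rw [Finset.card_image_of_injective _ hWminj, Finset.card_univ, Fintype.card_prod]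
    have hcardE : Fintype.card E = Fintype.card K ^ (k + r) := by
      rw [card_eq_pow_finrank (K := K) (V := E), hkE]
    have hcardL : Fintype.card L = Fintype.card K ^ k := by
      rw [card_eq_pow_finrank (K := K) (V := L), hkL]
    have hcardP : Fintype.card P = Fintype.card K ^ (t * k) := by
      rw [show Fintype.card P = Fintype.card L ^ t from by
        simp [hPdef, Fintype.card_fun]]
      rw [hcardL, ← pow_mul, mul_comm]
    -- counting projective points
    have hbij : Fintype.card Lˣ * Fintype.card (Projectivization L P)
        = Fintype.card P - 1 := by
      have hfun : ∀ cp : Lˣ × Projectivization L P, ((cp.1 : L) • cp.2.rep : P) ≠ 0 := by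
        intro cp h
        exact cp.2.rep_nonzero (hsmul _ _ h (Units.ne_zero cp.1))
      let g : Lˣ × Projectivization L P → {x : P // x ≠ 0} :=
        fun cp => ⟨(cp.1 : L) • cp.2.rep, hfun cp⟩
      have hginj : Function.Injective g := by
        rintro ⟨c, p⟩ ⟨c', p'⟩ h
        have h0 : (c : L) • p.rep = (c' : L) • p'.rep := congrArg Subtype.val h
        have hne : (c' : L) • p'.rep ≠ 0 := hfun (c', p')
        have hp : p = Projectivization.mk L ((c' : L) • p'.rep) hne :=
          hmk _ hne p (c : L) h0
        have hp' : p' = Projectivization.mk L ((c' : L) • p'.rep) hne :=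
          hmk _ hne p' (c' : L) rfl
        have hpp : p = p' := hp.trans hp'.symm
        have hc : (c : L) = (c' : L) := by
          apply hlamcancel p.rep p.rep_nonzero
          rw [h0, hpp]
        exact Prod.ext (Units.ext hc) hpp
      have hgsurj : Function.Surjective g := by
        rintro ⟨x, hx⟩
        obtain ⟨μ, hμ⟩ := Projectivization.exists_smul_eq_mk_rep L x hx
        refine ⟨(μ⁻¹, Projectivization.mk L x hx), Subtype.ext ?_⟩
        show ((μ⁻¹ : Lˣ) : L) • (Projectivization.mk L x hx).rep = x
        rw [← hμ, Units.smul_def, smul_smul,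
          Units.val_inv_eq_inv_val, inv_mul_cancel₀ (Units.ne_zero μ), one_smul]
      have hc := Fintype.card_congr (Equiv.ofBijective g ⟨hginj, hgsurj⟩)
      rw [Fintype.card_prod] at hc
      rw [hc]
      have := Fintype.card_subtype_compl (fun x : P => x = 0)
      rw [Fintype.card_subtype_eq (0 : P)] at this
      exact this
    have hLu : Fintype.card Lˣ = Fintype.card K ^ k - 1 := by
      rw [Fintype.card_units, hcardL]
    calc S.card * (Fintype.card K ^ k - 1)
        = Fintype.card E * (Fintype.card Lˣ * Fintype.card (Projectivization L P)) := by
          rw [hcard, hLu]; ring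
      _ = Fintype.card K ^ (k + r) * (Fintype.card K ^ (t * k) - 1) := by
          rw [hbij, hcardE, hcardP]

theorem stmt_6 (q n m k r : ℕ) (K : Type*) [Field K] [Fintype K] (hq : Fintype.card K = q)
    (V : Type*) [AddCommGroup V] [Module K V] [FiniteDimensional K V]
    (hV : Module.finrank K V = n)
    (hn : n = m * k + r) (hm : 2 ≤ m) (hr : r < k)
    (U : Submodule K V) (hU : Module.finrank K U = k + r) :
    ∃ S : Finset (Submodule K V),
      (∀ W ∈ S, Module.finrank K W = k ∧ W ⊓ U = ⊥) ∧
      (∀ v : Submodule K V, Module.finrank K v = 1 → ¬ v ≤ U → ∃! W, W ∈ S ∧ v ≤ W) ∧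
      (S.card : ℝ) = (q : ℝ) ^ (k + r) * ((q : ℝ) ^ (n - k - r) - 1) / ((q : ℝ) ^ k - 1) := by
  classical
  have hk1 : 1 ≤ k := by omega
  obtain ⟨L, _, _, hkL, _⟩ := exists_finite_ext K k (by omega)
  obtain ⟨E, _, _, hkE, _⟩ := exists_finite_ext K (k + r) (by omega)
  obtain ⟨t, rfl⟩ : ∃ t, m = t + 1 := ⟨m - 1, by omega⟩
  obtain ⟨S0, hS1, hS2, hS3⟩ := model_spread K L E k r t hk1 hkL hkE
  haveI : Module.Finite K L := Module.Finite.of_finite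
  haveI : Module.Finite K E := Module.Finite.of_finite
  haveI : FiniteDimensional K (E × (Fin t → L)) := by infer_instance
  have hnt : n = k + r + t * k := by rw [hn]; ring
  have hfrP : Module.finrank K (Fin t → L) = t * k := by
    rw [Module.finrank_pi_fintype, Finset.sum_const, Finset.card_univ,
      Fintype.card_fin, hkL, smul_eq_mul]
  have hfrM : Module.finrank K (E × (Fin t → L)) = n := by
    rw [Module.finrank_prod, hkE, hfrP, hnt]
  obtain ⟨U', hcompl⟩ := Submodule.exists_isCompl U
  have hfrU' : Module.finrank K U' = t * k := by
    have h := Submodule.finrank_add_eq_of_isCompl hcompl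
    rw [hU, hV, hnt] at h
    exact Nat.add_left_cancel h
  have heE : Nonempty (E ≃ₗ[K] U) :=
    FiniteDimensional.nonempty_linearEquiv_of_finrank_eq (by rw [hkE, hU])
  have heP : Nonempty ((Fin t → L) ≃ₗ[K] U') :=
    FiniteDimensional.nonempty_linearEquiv_of_finrank_eq (by rw [hfrP, hfrU'])
  obtain ⟨eE⟩ := heE
  obtain ⟨eP⟩ := heP
  let e : (E × (Fin t → L)) ≃ₗ[K] V :=
    (eE.prodCongr eP).trans (Submodule.prodEquivOfIsCompl U U' hcompl)
  have heval : ∀ z : E × (Fin t → L), e z = (eE z.1 : V) + (eP z.2 : V) := by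
    intro z
    show Submodule.prodEquivOfIsCompl U U' hcompl ((eE.prodCongr eP) z) = _
    rw [LinearEquiv.prodCongr_apply, Submodule.coe_prodEquivOfIsCompl']
  have hmemfst : ∀ z : E × (Fin t → L), z ∈ Submodule.fst K E (Fin t → L) ↔ z.2 = 0 := by
    intro z
    simp only [Submodule.fst, Submodule.mem_comap, Submodule.mem_bot, LinearMap.snd_apply]
  have heinj : Function.Injective (e.toLinearMap) := e.injective
  have hUmap : Submodule.map e.toLinearMap (Submodule.fst K E (Fin t → L)) = U := by
    apply le_antisymm
    · intro x hx
      rw [Submodule.mem_map] at hx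
      obtain ⟨z, hz, rfl⟩ := hx
      rw [hmemfst] at hz
      show e z ∈ U
      rw [heval, hz, map_zero, Submodule.coe_zero, add_zero]
      exact (eE z.1).2
    · intro u hu
      refine ⟨(eE.symm ⟨u, hu⟩, 0), (hmemfst _).mpr rfl, ?_⟩
      show e _ = u
      rw [heval, map_zero, Submodule.coe_zero, add_zero, LinearEquiv.apply_symm_apply]
  -- transport
  let oi : Submodule K (E × (Fin t → L)) ≃o Submodule K V := Submodule.orderIsoMapComap e
  have hoi : ∀ W : Submodule K (E × (Fin t → L)), oi W = Submodule.map e.toLinearMap W :=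
    fun _ => rfl
  have hoisymm : ∀ W : Submodule K V, oi.symm W = Submodule.comap e.toLinearMap W :=
    fun _ => rfl
  have hoifr : ∀ W : Submodule K (E × (Fin t → L)),
      Module.finrank K (oi W) = Module.finrank K W := by
    intro W
    rw [hoi]
    exact LinearEquiv.finrank_map_eq e W
  let S : Finset (Submodule K V) := S0.image (fun W => oi W)
  have hoiinj : Function.Injective (fun W : Submodule K (E × (Fin t → L)) => oi W) :=
    oi.injective
  refine ⟨S, ?_, ?_, ?_⟩
  · intro W hW
    obtain ⟨W0, hW0, rfl⟩ := Finset.mem_image.mp hW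
    obtain ⟨hrk, hinf⟩ := hS1 W0 hW0
    constructor
    · rw [hoifr, hrk]
    · rw [hoi, ← hUmap, ← Submodule.map_inf e.toLinearMap heinj, hinf, Submodule.map_bot]
  · intro v hv1 hvU
    set v0 : Submodule K (E × (Fin t → L)) := oi.symm v with hv0def
    have hv0fr : Module.finrank K v0 = 1 := by
      rw [hv0def, hoisymm, Submodule.comap_equiv_eq_map_symm]
      rw [LinearEquiv.finrank_map_eq e.symm v, hv1]
    have hv0U : ¬ v0 ≤ Submodule.fst K E (Fin t → L) := by
      intro h
      apply hvU
      have := oi.monotone h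
      rw [OrderIso.apply_symm_apply, hoi, hUmap] at this
      exact this
    obtain ⟨W0, ⟨hW0S, hvW0⟩, huniq0⟩ := hS2 v0 hv0fr hv0U
    refine ⟨oi W0, ⟨Finset.mem_image_of_mem _ hW0S, ?_⟩, ?_⟩
    · have := oi.monotone hvW0
      rwa [OrderIso.apply_symm_apply] at this
    · rintro W ⟨hWS, hvW⟩
      obtain ⟨W0', hW0'S, rfl⟩ := Finset.mem_image.mp hWS
      have hle : v0 ≤ W0' := by
        have := oi.symm.monotone hvW
        rwa [OrderIso.symm_apply_apply] at this
      rw [huniq0 W0' ⟨hW0'S, hle⟩]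
  · have hq2 : 2 ≤ q := by rw [← hq]; exact Fintype.one_lt_card
    rw [hq] at hS3
    have hScard : S.card = S0.card := Finset.card_image_of_injective _ hoiinj
    have hnkr : n - k - r = t * k := by
      rw [Nat.sub_sub, hnt, Nat.add_comm (k + r) (t * k), Nat.add_sub_cancel]
    have hqk1 : (1 : ℕ) ≤ q ^ k := Nat.one_le_pow _ _ (by omega)
    have hqtk1 : (1 : ℕ) ≤ q ^ (t * k) := Nat.one_le_pow _ _ (by omega)
    have hne : ((q : ℝ)) ^ k - 1 ≠ 0 := by
      have h1 : (1 : ℕ) < q ^ k := Nat.one_lt_pow (by omega) (by omega)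
      have : (1 : ℝ) < (q : ℝ) ^ k := by exact_mod_cast h1
      linarith
    rw [hnkr, eq_div_iff hne, hScard]
    have hcast := congrArg (Nat.cast : ℕ → ℝ) hS3
    push_cast [Nat.cast_sub hqk1, Nat.cast_sub hqtk1] at hcast
    convert hcast using 2
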